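/- arXiv:1405.7173 — 2 statements merged into one kernel-verified Lean document; each statement's English description precedes it below -/
import Mathlib

section
/- Let a, b ∈ [0,1] with a ≠ b, and define for θ ∈ [0,1] the mixture m(θ) = θ·a + (1−θ)·b. Then the function Q(θ) = θ·g(m₁(θ)) + (1−θ)·g(m₂(θ)), where g(p) = p·log p + (1−p)·log(1−p) (with the convention 0·log 0 = 0), specialized to the two-segment setting where m₁(θ) and m₂(θ) are the pre- and post-split mixture fractions of a two-distribution sequence with true split q₁ ∈ (0,1), satisfies: Q is nondecreasing on (0, q₁] and nonincreasing on [q₁, 1), so Q attains its maximum on (0,1) at θ = q₁. -/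
noncomputable def g (p : ℝ) : ℝ := p * Real.log p + (1 - p) * Real.log (1 - p)

/-- Pre-split mixture fraction. -/
noncomputable def F1mix (q₁ a b θ : ℝ) : ℝ :=
  (min q₁ θ * a + max (θ - q₁) 0 * b) / (min q₁ θ + max (θ - q₁) 0)

/-- Post-split mixture fraction. -/
noncomputable def F2mix (q₁ a b θ : ℝ) : ℝ :=
  (max (q₁ - θ) 0 * a + min (1 - θ) (1 - q₁) * b) /
    (max (q₁ - θ) 0 + min (1 - θ) (1 - q₁))

noncomputable def Qfun (q₁ a b θ : ℝ) : ℝ :=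
  θ * g (F1mix q₁ a b θ) + (1 - θ) * g (F2mix q₁ a b θ)

lemma gconv : ConvexOn ℝ (Set.Icc (0:ℝ) 1) g := by
  have h1 : ConvexOn ℝ (Set.Icc (0:ℝ) 1) (fun p : ℝ => p * Real.log p) :=
    Real.convexOn_mul_log.subset Set.Icc_subset_Ici_self (convex_Icc 0 1)
  have h2 : ConvexOn ℝ (Set.Icc (0:ℝ) 1) (fun p : ℝ => (1 - p) * Real.log (1 - p)) := by
    refine ⟨convex_Icc 0 1, ?_⟩
    intro x hx y hy s t hs ht hst
    have hx' : (1 - x) ∈ Set.Icc (0:ℝ) 1 := ⟨by linarith [hx.2], by linarith [hx.1]⟩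
    have hy' : (1 - y) ∈ Set.Icc (0:ℝ) 1 := ⟨by linarith [hy.2], by linarith [hy.1]⟩
    have := h1.2 hx' hy' hs ht hst
    simp only [smul_eq_mul] at this ⊢
    have hrw : 1 - (s * x + t * y) = s * (1 - x) + t * (1 - y) := by linarith [hst]
    rw [hrw]; exact this
  exact h1.add h2

lemma F1_left (q₁ a b θ : ℝ) (h0 : 0 < θ) (hle : θ ≤ q₁) : F1mix q₁ a b θ = a := by
  unfold F1mix
  rw [min_eq_right hle, max_eq_right (by linarith)]
  field_simp
  ring

lemma F2_left (q₁ a b θ : ℝ) (hle : θ ≤ q₁) (hq1 : q₁ ≤ 1) :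
    F2mix q₁ a b θ = ((q₁ - θ) * a + (1 - q₁) * b) / (1 - θ) := by
  unfold F2mix
  rw [max_eq_left (by linarith), min_eq_right (by linarith)]
  congr 1; ring

lemma F1_right (q₁ a b θ : ℝ) (h0 : 0 < q₁) (hle : q₁ ≤ θ) :
    F1mix q₁ a b θ = (q₁ * a + (θ - q₁) * b) / θ := by
  unfold F1mix
  rw [min_eq_left hle, max_eq_left (by linarith)]
  congr 1; ring

lemma F2_right (q₁ a b θ : ℝ) (hle : q₁ ≤ θ) (h1 : θ < 1) : F2mix q₁ a b θ = b := by
  unfold F2mix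
  rw [max_eq_right (by linarith), min_eq_left (by linarith)]
  have h : (1:ℝ) - θ ≠ 0 := by linarith
  rw [zero_mul, zero_add, zero_add, mul_div_cancel_left₀ b h]

lemma mix_mem {a b w1 w2 : ℝ} (ha : a ∈ Set.Icc (0:ℝ) 1) (hb : b ∈ Set.Icc (0:ℝ) 1)
    (h1 : 0 ≤ w1) (h2 : 0 ≤ w2) (hs : w1 + w2 = 1) : w1 * a + w2 * b ∈ Set.Icc (0:ℝ) 1 := by
  have := (convex_Icc (0:ℝ) 1) ha hb h1 h2 hs
  simpa [smul_eq_mul] using this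

lemma Qmono (a b q₁ : ℝ) (ha : a ∈ Set.Icc (0:ℝ) 1) (hb : b ∈ Set.Icc (0:ℝ) 1)
    (hq1 : q₁ < 1) {θ θ' : ℝ} (h0 : 0 < θ) (hle : θ ≤ θ') (hq : θ' ≤ q₁) :
    Qfun q₁ a b θ ≤ Qfun q₁ a b θ' := by
  have h0' : 0 < θ' := lt_of_lt_of_le h0 hle
  have h1θ : (0:ℝ) < 1 - θ := by linarith
  have h1θ' : (0:ℝ) < 1 - θ' := by linarith
  have h1θne : (1:ℝ) - θ ≠ 0 := ne_of_gt h1θ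
  have h1θ'ne : (1:ℝ) - θ' ≠ 0 := ne_of_gt h1θ'
  set m : ℝ → ℝ := fun t => ((q₁ - t) * a + (1 - q₁) * b) / (1 - t) with hm
  have hmem : ∀ t, 0 < 1 - t → t ≤ q₁ → m t ∈ Set.Icc (0:ℝ) 1 := by
    intro t ht htq
    have htne : (1:ℝ) - t ≠ 0 := ne_of_gt ht
    have hrw : m t = ((q₁ - t)/(1 - t)) * a + ((1 - q₁)/(1 - t)) * b := by
      simp only [hm]; field_simp; try ring
    rw [hrw]
    exact mix_mem ha hb (div_nonneg (by linarith) ht.le)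
      (div_nonneg (by linarith) ht.le) (by field_simp; try ring)
  set s : ℝ := (θ' - θ) / (1 - θ) with hs
  have hsnn : 0 ≤ s := div_nonneg (by linarith) h1θ.le
  have hs1 : 0 ≤ 1 - s := by
    rw [hs, sub_nonneg, div_le_one h1θ]; linarith
  have hsum : s + (1 - s) = 1 := by ring
  have hrepr : s * a + (1 - s) * m θ' = m θ := by
    simp only [hm, hs]
    field_simp
    ring
  have key : g (m θ) ≤ s * g a + (1 - s) * g (m θ') := by
    have := gconv.2 ha (hmem θ' h1θ' hq) hsnn hs1 hsum
    simp only [smul_eq_mul] at this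
    rw [hrepr] at this
    exact this
  have e1 : F1mix q₁ a b θ = a := F1_left q₁ a b θ h0 (hle.trans hq)
  have e1' : F1mix q₁ a b θ' = a := F1_left q₁ a b θ' h0' hq
  have e2 : F2mix q₁ a b θ = m θ := F2_left q₁ a b θ (hle.trans hq) hq1.le
  have e2' : F2mix q₁ a b θ' = m θ' := F2_left q₁ a b θ' hq hq1.le
  have hst : (1 - θ) * s = θ' - θ := by rw [hs]; field_simp
  have hst' : (1 - θ) * (1 - s) = 1 - θ' := by rw [hs]; field_simp; try ring
  calc Qfun q₁ a b θ = θ * g a + (1 - θ) * g (m θ) := by rw [Qfun, e1, e2]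
    _ ≤ θ * g a + (1 - θ) * (s * g a + (1 - s) * g (m θ')) := by
        have := mul_le_mul_of_nonneg_left key h1θ.le
        linarith
    _ = θ' * g a + (1 - θ') * g (m θ') := by
        linear_combination g a * hst + g (m θ') * hst'
    _ = Qfun q₁ a b θ' := by rw [Qfun, e1', e2']

lemma Qanti (a b q₁ : ℝ) (ha : a ∈ Set.Icc (0:ℝ) 1) (hb : b ∈ Set.Icc (0:ℝ) 1)
    (hq0 : 0 < q₁) {θ θ' : ℝ} (hq : q₁ ≤ θ) (hle : θ ≤ θ') (h1 : θ' < 1) :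
    Qfun q₁ a b θ' ≤ Qfun q₁ a b θ := by
  have h0 : 0 < θ := lt_of_lt_of_le hq0 hq
  have h0' : 0 < θ' := lt_of_lt_of_le h0 hle
  have h1θ : θ < 1 := lt_of_le_of_lt hle h1
  have h0ne : θ ≠ 0 := ne_of_gt h0
  have h0'ne : θ' ≠ 0 := ne_of_gt h0'
  set m : ℝ → ℝ := fun t => (q₁ * a + (t - q₁) * b) / t with hm
  have hmem : ∀ t, 0 < t → q₁ ≤ t → m t ∈ Set.Icc (0:ℝ) 1 := by
    intro t ht htq
    have htne : t ≠ 0 := ne_of_gt ht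
    have hrw : m t = (q₁ / t) * a + ((t - q₁) / t) * b := by
      simp only [hm]; field_simp; try ring
    rw [hrw]
    exact mix_mem ha hb (div_nonneg hq0.le ht.le)
      (div_nonneg (by linarith) ht.le) (by field_simp; try ring)
  set s : ℝ := θ / θ' with hs
  have hsnn : 0 ≤ s := div_nonneg h0.le h0'.le
  have hs1 : 0 ≤ 1 - s := by
    rw [hs, sub_nonneg, div_le_one h0']; exact hle
  have hsum : s + (1 - s) = 1 := by ring
  have hrepr : s * m θ + (1 - s) * b = m θ' := by
    simp only [hm, hs]
    field_simp
    ring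
  have key : g (m θ') ≤ s * g (m θ) + (1 - s) * g b := by
    have := gconv.2 (hmem θ h0 hq) hb hsnn hs1 hsum
    simp only [smul_eq_mul] at this
    rw [hrepr] at this
    exact this
  have e1 : F1mix q₁ a b θ = m θ := F1_right q₁ a b θ hq0 hq
  have e1' : F1mix q₁ a b θ' = m θ' := F1_right q₁ a b θ' hq0 (hq.trans hle)
  have e2 : F2mix q₁ a b θ = b := F2_right q₁ a b θ hq h1θ
  have e2' : F2mix q₁ a b θ' = b := F2_right q₁ a b θ' (hq.trans hle) h1
  have hst : θ' * s = θ := by rw [hs]; field_simp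
  have hst' : θ' * (1 - s) = θ' - θ := by rw [hs]; field_simp; try ring
  calc Qfun q₁ a b θ' = θ' * g (m θ') + (1 - θ') * g b := by rw [Qfun, e1', e2']
    _ ≤ θ' * (s * g (m θ) + (1 - s) * g b) + (1 - θ') * g b := by
        have := mul_le_mul_of_nonneg_left key h0'.le
        linarith
    _ = θ * g (m θ) + (1 - θ) * g b := by
        linear_combination g (m θ) * hst + g b * hst'
    _ = Qfun q₁ a b θ := by rw [Qfun, e1, e2]

/-- The population objective `Q` is nondecreasing on `(0, q₁]`, nonincreasing on
`[q₁, 1)`, hence attains its maximum over `(0,1)` at the true split `q₁`. -/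
theorem Q_max_at_true_split (a b q₁ : ℝ)
    (ha : a ∈ Set.Ioo (0:ℝ) 1) (hb : b ∈ Set.Ioo (0:ℝ) 1) (hab : a ≠ b)
    (hq : q₁ ∈ Set.Ioo (0:ℝ) 1) :
    MonotoneOn (Qfun q₁ a b) (Set.Ioc (0:ℝ) q₁) ∧
      AntitoneOn (Qfun q₁ a b) (Set.Ico q₁ (1:ℝ)) ∧
      ∀ θ ∈ Set.Ioo (0:ℝ) 1, Qfun q₁ a b θ ≤ Qfun q₁ a b q₁ := by
  have ha' : a ∈ Set.Icc (0:ℝ) 1 := ⟨ha.1.le, ha.2.le⟩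
  have hb' : b ∈ Set.Icc (0:ℝ) 1 := ⟨hb.1.le, hb.2.le⟩
  refine ⟨?_, ?_, ?_⟩
  · intro x hx y hy hxy
    exact Qmono a b q₁ ha' hb' hq.2 hx.1 hxy hy.2
  · intro x hx y hy hxy
    exact Qanti a b q₁ ha' hb' hq.1 hx.1 hxy hy.2
  · intro θ hθ
    rcases le_or_gt θ q₁ with h | h
    · exact Qmono a b q₁ ha' hb' hq.2 hθ.1 h le_rfl
    · exact Qanti a b q₁ ha' hb' hq.1 le_rfl h.le hθ.2
end

section
/- Wellner's inequality (i): Let G_n be the empirical distribution function of n i.i.d. Uniform(0,1) random variables. For all λ ≥ 1 and 0 < a ≤ 1, Pr( sup_{a ≤ u ≤ 1} G_n(u)/u ≥ λ ) ≤ exp(−n·a·h(λ)), where h(x) = x(log x − 1) + 1. -/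
open MeasureTheory ProbabilityTheory

noncomputable def hfun (x : ℝ) : ℝ := x * (Real.log x - 1) + 1

/-- Empirical distribution function of `U₁,…,Uₙ`. -/
noncomputable def empCDF (n : ℕ) (U : Fin n → ℝ) (u : ℝ) : ℝ :=
  (Finset.univ.filter (fun i => U i ≤ u)).card / n

namespace WellnerAux

variable {n : ℕ} {lam a : ℝ}

/-- number of points of `x` (with index in `s`) that are `≤ u`. -/
noncomputable def cnt (s : Finset (Fin n)) (x : Fin n → ℝ) (u : ℝ) : ℕ :=
  (s.filter fun i => x i ≤ u).card

lemma empCDF_eq (x : Fin n → ℝ) (u : ℝ) :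
    empCDF n x u = (cnt Finset.univ x u : ℝ) / n := rfl

lemma cnt_mono {s : Finset (Fin n)} {x : Fin n → ℝ} {u v : ℝ} (h : u ≤ v) :
    cnt s x u ≤ cnt s x v := by
  apply Finset.card_le_card
  apply Finset.monotone_filter_right
  intro i _ hi
  exact le_trans hi h

lemma cnt_le_card (s : Finset (Fin n)) (x : Fin n → ℝ) (u : ℝ) :
    cnt s x u ≤ s.card :=
  Finset.card_le_card (Finset.filter_subset _ _)

lemma cnt_union {s t : Finset (Fin n)} (hst : Disjoint s t) (x : Fin n → ℝ) (u : ℝ) :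
    cnt (s ∪ t) x u = cnt s x u + cnt t x u := by
  unfold cnt
  rw [Finset.filter_union, Finset.card_union_of_disjoint
    (Finset.disjoint_filter_filter hst)]

lemma cnt_full {s : Finset (Fin n)} {x : Fin n → ℝ} {u : ℝ} (h : ∀ i ∈ s, x i ≤ u) :
    cnt s x u = s.card := by
  unfold cnt
  rw [Finset.filter_true_of_mem h]

/-- the deterministic "boundary time" for count level `k`. -/
noncomputable def tv (lam a : ℝ) (n : ℕ) (k : ℕ) : ℝ := max a ((k : ℝ) / (lam * n))

section basic

variable (hlam : 1 ≤ lam) (ha : 0 < a) (ha1 : a ≤ 1) (hn : 0 < n)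

include hlam hn in
lemma hln : (0:ℝ) < lam * n := by
  have : (0:ℝ) < n := by exact_mod_cast hn
  nlinarith

lemma tv_ge_a (k : ℕ) : a ≤ tv lam a n k := le_max_left _ _

include ha in
lemma tv_pos (k : ℕ) : 0 < tv lam a n k := lt_of_lt_of_le ha (tv_ge_a k)

include hlam ha1 hn in
lemma tv_le_one {k : ℕ} (hk : k ≤ n) : tv lam a n k ≤ 1 := by
  apply max_le ha1
  rw [div_le_one (hln hlam hn)]
  have h1 : (k:ℝ) ≤ n := by exact_mod_cast hk
  nlinarith [hln hlam hn, h1]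

include hlam hn in
lemma le_mul_tv (k : ℕ) : (k:ℝ) ≤ lam * n * tv lam a n k := by
  have h := le_max_right a ((k : ℝ) / (lam * n))
  have h2 := mul_le_mul_of_nonneg_left h (le_of_lt (hln hlam hn))
  calc (k:ℝ) = lam * n * ((k:ℝ) / (lam * n)) := by
        field_simp
    _ ≤ lam * n * tv lam a n k := h2

include hlam hn in
lemma tv_mono {k k' : ℕ} (h : k ≤ k') : tv lam a n k ≤ tv lam a n k' := by
  have hpos := hln hlam hn
  apply max_le_max le_rfl
  have hkk : (k:ℝ) ≤ (k':ℝ) := by exact_mod_cast h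
  gcongr

include hlam hn in
lemma mul_tv_eq {k : ℕ} (hk : lam * n * a ≤ (k:ℝ)) : lam * n * tv lam a n k = k := by
  have hpos := hln hlam hn
  have hma : a ≤ (k:ℝ) / (lam * n) := by
    rw [le_div_iff₀ hpos]
    linarith [hk]
  unfold tv
  rw [max_eq_right hma]
  field_simp

end basic



section main

variable (hlam : 1 ≤ lam) (ha : 0 < a) (ha1 : a ≤ 1) (hn : 0 < n)

include hlam hn in
lemma bridge {A : Finset (Fin n)} {x : Fin n → ℝ}
    (hout : ∀ i ∉ A, tv lam a n A.card < x i)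
    (hpt : ∀ i ∉ A, x i ≤ 1 → (A.card : ℝ) + cnt Aᶜ x (x i) < lam * n * x i) :
    ∀ u, tv lam a n A.card < u → u ≤ 1 → (A.card : ℝ) + cnt Aᶜ x u < lam * n * u := by
  intro u hu h1
  by_contra hcon
  push_neg at hcon
  have hpos := hln hlam hn
  rcases Nat.eq_zero_or_pos (cnt Aᶜ x u) with h0 | hposc
  · rw [h0] at hcon
    have h2 : (A.card : ℝ) ≤ lam * n * tv lam a n A.card := le_mul_tv hlam hn _
    have h3 : lam * n * tv lam a n A.card < lam * n * u :=
      mul_lt_mul_of_pos_left hu hpos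
    simp only [Nat.cast_zero, add_zero] at hcon
    linarith
  · have hne : (Aᶜ.filter fun i => x i ≤ u).Nonempty := by
      rw [← Finset.card_pos]
      exact hposc
    obtain ⟨i, hiB, himax⟩ := Finset.exists_max_image _ x hne
    rw [Finset.mem_filter, Finset.mem_compl] at hiB
    obtain ⟨hiA, hiu⟩ := hiB
    have hcnt_eq : cnt Aᶜ x (x i) = cnt Aᶜ x u := by
      unfold cnt
      congr 1
      apply Finset.ext
      intro j
      simp only [Finset.mem_filter, Finset.mem_compl]
      constructor
      · rintro ⟨hj, hjle⟩
        exact ⟨hj, le_trans hjle hiu⟩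
      · rintro ⟨hj, hjle⟩
        refine ⟨hj, himax j ?_⟩
        rw [Finset.mem_filter, Finset.mem_compl]
        exact ⟨hj, hjle⟩
    have hto : tv lam a n A.card < x i := hout i (by simpa using hiA)
    have h4 := hpt i (by simpa using hiA) (le_trans hiu h1)
    rw [hcnt_eq] at h4
    have h5 : lam * n * x i ≤ lam * n * u :=
      mul_le_mul_of_nonneg_left hiu (le_of_lt hpos)
    linarith

include hlam ha ha1 hn in
lemma decomp {x : Fin n → ℝ} {s : ℝ} (hsa : a ≤ s) (hs1 : s ≤ 1)
    (hc : lam * n * s ≤ (cnt Finset.univ x s : ℝ)) :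
    ∃ A : Finset (Fin n),
      lam * n * a ≤ (A.card : ℝ) ∧
      (∀ i, i ∈ A ↔ x i ≤ tv lam a n A.card) ∧
      (∀ u, tv lam a n A.card < u → u ≤ 1 →
        (A.card : ℝ) + cnt Aᶜ x u < lam * n * u) := by
  classical
  have hpos := hln hlam hn
  set P : ℕ → Prop := fun k =>
    ∃ u, a ≤ u ∧ u ≤ 1 ∧ lam * n * u ≤ (k:ℝ) ∧ cnt Finset.univ x u = k with hP
  set CS : Finset ℕ := (Finset.range (n+1)).filter P with hCS
  have hmemCS : ∀ k, k ∈ CS ↔ k ≤ n ∧ P k := by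
    intro k
    rw [hCS, Finset.mem_filter, Finset.mem_range, Nat.lt_succ_iff]
  have hk0 : cnt Finset.univ x s ∈ CS := by
    rw [hmemCS]
    refine ⟨?_, s, hsa, hs1, hc, rfl⟩
    calc cnt Finset.univ x s ≤ Finset.univ.card := cnt_le_card _ _ _
      _ = n := by simp
  have hne : CS.Nonempty := ⟨_, hk0⟩
  set k := CS.max' hne with hkdef
  have hkCS : k ∈ CS := CS.max'_mem hne
  rw [hmemCS] at hkCS
  obtain ⟨hkn, u₀, hu₀a, hu₀1, hu₀k, hu₀c⟩ := hkCS
  set t := tv lam a n k with htdef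
  have hak : lam * n * a ≤ (k:ℝ) := by
    have : lam * n * a ≤ lam * n * u₀ :=
      mul_le_mul_of_nonneg_left hu₀a (le_of_lt hpos)
    linarith
  have hu₀t : u₀ ≤ t := by
    have h1 : u₀ ≤ (k:ℝ) / (lam * n) := by
      rw [le_div_iff₀ hpos]
      linarith [hu₀k]
    exact le_trans h1 (le_max_right _ _)
  have ht1 : t ≤ 1 := tv_le_one hlam ha1 hn hkn
  have hta : a ≤ t := tv_ge_a _
  have hlnt : lam * n * t = (k:ℝ) := mul_tv_eq hlam hn hak
  have hct : cnt Finset.univ x t = k := by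
    have hge : k ≤ cnt Finset.univ x t := by
      rw [← hu₀c]
      exact cnt_mono hu₀t
    have hmem : cnt Finset.univ x t ∈ CS := by
      rw [hmemCS]
      refine ⟨?_, t, hta, ht1, ?_, rfl⟩
      · calc cnt Finset.univ x t ≤ Finset.univ.card := cnt_le_card _ _ _
          _ = n := by simp
      · rw [hlnt]
        exact_mod_cast hge
    have hle : cnt Finset.univ x t ≤ k := CS.le_max' _ hmem
    omega
  set A : Finset (Fin n) := Finset.univ.filter (fun i => x i ≤ t) with hA
  have hcard : A.card = k := hct
  refine ⟨A, ?_, ?_, ?_⟩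
  · rw [hcard]
    exact hak
  · intro i
    rw [hcard, ← htdef, hA, Finset.mem_filter]
    simp
  · intro u hu h1
    rw [hcard] at hu ⊢
    rw [← htdef] at hu
    by_contra hcon
    push_neg at hcon
    have hsplit : cnt Finset.univ x u = k + cnt Aᶜ x u := by
      have hdis : Disjoint A Aᶜ := disjoint_compl_right
      rw [← Finset.union_compl A, cnt_union hdis]
      congr 1
      rw [← hcard]
      apply cnt_full
      intro i hi
      rw [hA, Finset.mem_filter] at hi
      exact le_trans hi.2 (le_of_lt hu)
    have hmem : cnt Finset.univ x u ∈ CS := by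
      rw [hmemCS]
      refine ⟨?_, u, le_trans hta (le_of_lt hu), h1, ?_, rfl⟩
      · calc cnt Finset.univ x u ≤ Finset.univ.card := cnt_le_card _ _ _
          _ = n := by simp
      · rw [hsplit]
        push_cast
        linarith
    have hle : cnt Finset.univ x u ≤ k := CS.le_max' _ hmem
    have h6 : (cnt Finset.univ x u : ℝ) ≤ k := by exact_mod_cast hle
    rw [hsplit] at h6
    push_cast at h6
    have h5 : lam * n * t < lam * n * u := mul_lt_mul_of_pos_left hu hpos
    linarith

include hlam ha ha1 hn in
lemma disj_core_le {J A A' : Finset (Fin n)} {x : Fin n → ℝ}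
    (hcard : A.card ≤ A'.card)
    (hJA : J ⊆ A) (hJA' : J ⊆ A')
    (hg : lam * n * a ≤ (A.card : ℝ)) (hg' : lam * n * a ≤ (A'.card : ℝ))
    (hin : ∀ i ∈ A \ J, x i ≤ tv lam a n A.card)
    (hout : ∀ i ∉ A, tv lam a n A.card < x i)
    (hnc : ∀ u, tv lam a n A.card < u → u ≤ 1 →
      (A.card : ℝ) + cnt Aᶜ x u < lam * n * u)
    (hin' : ∀ i ∈ A' \ J, x i ≤ tv lam a n A'.card)
    (hout' : ∀ i ∉ A', tv lam a n A'.card < x i) :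
    A = A' := by
  have hpos := hln hlam hn
  set t := tv lam a n A.card with htdef
  set t' := tv lam a n A'.card with htdef'
  have htt' : t ≤ t' := tv_mono hlam hn hcard
  have hfil : ∀ (B : Finset (Fin n)) (r : ℝ), J ⊆ B →
      (∀ i ∈ B \ J, x i ≤ r) → (∀ i ∉ B, r < x i) →
      Jᶜ.filter (fun i => x i ≤ r) = B \ J := by
    intro B r hJB hinB houtB
    apply Finset.ext
    intro i
    simp only [Finset.mem_filter, Finset.mem_compl, Finset.mem_sdiff]
    constructor
    · rintro ⟨hiJ, hile⟩
      refine ⟨?_, hiJ⟩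
      by_contra hiB
      exact absurd hile (not_le.mpr (houtB i hiB))
    · rintro ⟨hiB, hiJ⟩
      exact ⟨hiJ, hinB i (Finset.mem_sdiff.mpr ⟨hiB, hiJ⟩)⟩
  have hfA : Jᶜ.filter (fun i => x i ≤ t) = A \ J := hfil A t hJA hin hout
  have hfA' : Jᶜ.filter (fun i => x i ≤ t') = A' \ J := hfil A' t' hJA' hin' hout'
  rcases eq_or_lt_of_le htt' with ht | ht
  · -- same boundary: sets coincide
    rw [ht] at hfA
    have hAA' : A \ J = A' \ J := by rw [← hfA, ← hfA']
    calc A = J ∪ A \ J := (Finset.union_sdiff_of_subset hJA).symm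
      _ = J ∪ A' \ J := by rw [hAA']
      _ = A' := Finset.union_sdiff_of_subset hJA'
  · -- t < t' : contradiction with no-crossing of A at u = t'
    exfalso
    have ht'1 : t' ≤ 1 := by
      apply tv_le_one hlam ha1 hn
      calc A'.card ≤ Finset.univ.card := Finset.card_le_univ _
        _ = n := by simp
    have hkey := hnc t' ht ht'1
    have hlnt' : lam * n * t' = (A'.card : ℝ) := mul_tv_eq hlam hn hg'
    rw [hlnt'] at hkey
    -- cnt Jᶜ x t' = (A'\J).card  and  = (A\J).card + cnt Aᶜ x t'
    have hc1 : cnt Jᶜ x t' = (A' \ J).card := by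
      unfold cnt
      rw [hfA']
    have hJsplit : Jᶜ = (A \ J) ∪ Aᶜ := by
      apply Finset.ext
      intro i
      simp only [Finset.mem_compl, Finset.mem_union, Finset.mem_sdiff]
      constructor
      · intro hiJ
        by_cases hiA : i ∈ A
        · exact Or.inl ⟨hiA, hiJ⟩
        · exact Or.inr hiA
      · rintro (⟨_, hiJ⟩ | hiA)
        · exact hiJ
        · intro hiJ
          exact hiA (hJA hiJ)
    have hdisAJ : Disjoint (A \ J) Aᶜ := by
      rw [Finset.disjoint_left]
      intro i hi hic
      rw [Finset.mem_compl] at hic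
      exact hic (Finset.mem_sdiff.mp hi).1
    have hc2 : cnt Jᶜ x t' = (A \ J).card + cnt Aᶜ x t' := by
      rw [hJsplit, cnt_union hdisAJ]
      congr 1
      apply cnt_full
      intro i hi
      exact le_trans (hin i hi) (le_of_lt ht)
    have hcJ : (A \ J).card + J.card = A.card := Finset.card_sdiff_add_card_eq_card hJA
    have hcJ' : (A' \ J).card + J.card = A'.card := Finset.card_sdiff_add_card_eq_card hJA'
    have e1 : ((A' \ J).card : ℝ) = (A \ J).card + cnt Aᶜ x t' := by
      rw [← hc1, hc2]
      push_cast
      ring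
    have e2 : ((A \ J).card : ℝ) + J.card = A.card := by exact_mod_cast hcJ
    have e3 : ((A' \ J).card : ℝ) + J.card = A'.card := by exact_mod_cast hcJ'
    linarith

include hlam ha ha1 hn in
lemma disj_core {J A A' : Finset (Fin n)} {x : Fin n → ℝ}
    (hJA : J ⊆ A) (hJA' : J ⊆ A')
    (hg : lam * n * a ≤ (A.card : ℝ)) (hg' : lam * n * a ≤ (A'.card : ℝ))
    (hin : ∀ i ∈ A \ J, x i ≤ tv lam a n A.card)
    (hout : ∀ i ∉ A, tv lam a n A.card < x i)
    (hnc : ∀ u, tv lam a n A.card < u → u ≤ 1 →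
      (A.card : ℝ) + cnt Aᶜ x u < lam * n * u)
    (hin' : ∀ i ∈ A' \ J, x i ≤ tv lam a n A'.card)
    (hout' : ∀ i ∉ A', tv lam a n A'.card < x i)
    (hnc' : ∀ u, tv lam a n A'.card < u → u ≤ 1 →
      (A'.card : ℝ) + cnt A'ᶜ x u < lam * n * u) :
    A = A' := by
  rcases le_total A.card A'.card with h | h
  · exact disj_core_le hlam ha ha1 hn h hJA hJA' hg hg' hin hout hnc hin' hout'
  · exact (disj_core_le hlam ha ha1 hn h hJA' hJA hg' hg hin' hout' hnc' hin hout).symm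

include hlam ha ha1 hn in
lemma sup_red {x : Fin n → ℝ}
    (h : lam ≤ ⨆ u : Set.Icc a 1, empCDF n x u / u) :
    ∃ s, a ≤ s ∧ s ≤ 1 ∧ lam * n * s ≤ (cnt Finset.univ x s : ℝ) := by
  classical
  have hpos := hln hlam hn
  have hnR : (0:ℝ) < n := by exact_mod_cast hn
  set S : Finset ℝ :=
    insert a ((Finset.univ.image x).filter (fun v => a < v ∧ v ≤ 1)) with hS
  have hSne : S.Nonempty := ⟨a, Finset.mem_insert_self _ _⟩
  have hSbound : ∀ s ∈ S, a ≤ s ∧ s ≤ 1 := by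
    intro s hs
    rw [hS, Finset.mem_insert] at hs
    rcases hs with rfl | hs
    · exact ⟨le_refl _, ha1⟩
    · rw [Finset.mem_filter] at hs
      exact ⟨le_of_lt hs.2.1, hs.2.2⟩
  set M := S.sup' hSne (fun u => empCDF n x u / u) with hM
  have hbound : ∀ u : Set.Icc a 1, empCDF n x u / u ≤ M := by
    rintro ⟨u, hua, hu1⟩
    simp only
    set S' := S.filter (fun v => v ≤ u) with hS'
    have haS' : a ∈ S' := by
      rw [hS', Finset.mem_filter]
      exact ⟨Finset.mem_insert_self _ _, hua⟩
    have hS'ne : S'.Nonempty := ⟨a, haS'⟩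
    set u' := S'.max' hS'ne with hu'
    have hu'S' : u' ∈ S' := S'.max'_mem hS'ne
    have hu'S : u' ∈ S := Finset.mem_of_mem_filter _ hu'S'
    have hu'le : u' ≤ u := (Finset.mem_filter.mp hu'S').2
    have hau' : a ≤ u' := S'.le_max' a haS'
    have hcnteq : cnt Finset.univ x u = cnt Finset.univ x u' := by
      unfold cnt
      congr 1
      apply Finset.ext
      intro i
      simp only [Finset.mem_filter, Finset.mem_univ, true_and]
      constructor
      · intro hle
        by_cases hia : x i ≤ a
        · exact le_trans hia hau'
        · push_neg at hia
          have hxiS : x i ∈ S' := by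
            rw [hS', Finset.mem_filter, hS, Finset.mem_insert]
            refine ⟨Or.inr ?_, hle⟩
            rw [Finset.mem_filter]
            exact ⟨Finset.mem_image_of_mem x (Finset.mem_univ i), hia,
              le_trans hle hu1⟩
          exact S'.le_max' _ hxiS
      · intro hle
        exact le_trans hle hu'le
    have hstep : empCDF n x u / u ≤ empCDF n x u' / u' := by
      rw [empCDF_eq, empCDF_eq, hcnteq]
      apply div_le_div_of_nonneg_left _ _ hu'le
      · positivity
      · linarith
    exact le_trans hstep (Finset.le_sup' (fun u => empCDF n x u / u) hu'S)
  have hlamM : lam ≤ M := by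
    refine le_trans h ?_
    have : Nonempty (Set.Icc a 1) := ⟨⟨a, le_refl _, ha1⟩⟩
    exact ciSup_le hbound
  obtain ⟨s, hsS, hs⟩ := Finset.exists_mem_eq_sup' hSne (fun u => empCDF n x u / u)
  rw [hM, hs] at hlamM
  obtain ⟨hsa, hs1⟩ := hSbound s hsS
  refine ⟨s, hsa, hs1, ?_⟩
  have hspos : 0 < s := lt_of_lt_of_le ha hsa
  rw [empCDF_eq, div_div] at hlamM
  rw [le_div_iff₀ (by positivity)] at hlamM
  calc lam * n * s = lam * (n * s) := by ring
    _ ≤ (cnt Finset.univ x s : ℝ) := hlamM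

lemma cnt_cast_sum (s : Finset (Fin n)) (x : Fin n → ℝ) (u : ℝ) :
    ((cnt s x u : ℕ) : ℝ) = ∑ j ∈ s, if x j ≤ u then (1:ℝ) else 0 := by
  unfold cnt
  rw [Finset.card_filter]
  push_cast
  apply Finset.sum_congr rfl
  intro j _
  split <;> simp

end main

section measureLayer

variable {Ω : Type*} [MeasurableSpace Ω] (μ : Measure Ω) [IsProbabilityMeasure μ]
variable (lam a : ℝ) (U : Fin n → Ω → ℝ)

/-- the event that all points outside `A` are beyond the boundary time of `A` and
no crossing occurs after it. -/
def Fev (A : Finset (Fin n)) : Set Ω :=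
  {ω | ∀ i ∉ A, tv lam a n A.card < U i ω ∧
    (U i ω ≤ 1 → (A.card : ℝ) + cnt Aᶜ (fun j => U j ω) (U i ω) < lam * n * U i ω)}

def Dev (J A : Finset (Fin n)) : Set Ω :=
  {ω | ∀ i ∈ A \ J, U i ω ≤ tv lam a n A.card} ∩ Fev lam a U A

/-- admissible index sets containing `J`. -/
noncomputable def AF (lam a : ℝ) (n : ℕ) (J : Finset (Fin n)) : Finset (Finset (Fin n)) :=
  Finset.univ.filter (fun A => J ⊆ A ∧ lam * n * a ≤ (A.card : ℝ))

lemma mem_AF {J A : Finset (Fin n)} :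
    A ∈ AF lam a n J ↔ J ⊆ A ∧ lam * n * a ≤ (A.card : ℝ) := by
  unfold AF
  simp [Finset.mem_filter]

variable {U}

lemma measurable_cnt_apply (hmeas : ∀ i, Measurable (U i)) (s : Finset (Fin n)) (i : Fin n) :
    Measurable fun ω => ((cnt s (fun j => U j ω) (U i ω) : ℕ) : ℝ) := by
  have heq : (fun ω => ((cnt s (fun j => U j ω) (U i ω) : ℕ) : ℝ)) =
      fun ω => ∑ j ∈ s, if U j ω ≤ U i ω then (1:ℝ) else 0 := by
    funext ω
    exact cnt_cast_sum s _ _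
  rw [heq]
  apply Finset.measurable_sum
  intro j _
  exact Measurable.ite (measurableSet_le (hmeas j) (hmeas i)) measurable_const
    measurable_const

lemma measurable_Fev (hmeas : ∀ i, Measurable (U i)) (A : Finset (Fin n)) :
    MeasurableSet (Fev lam a U A) := by
  have heq : Fev lam a U A = ⋂ i ∈ (Aᶜ : Finset (Fin n)),
      ({ω | tv lam a n A.card < U i ω} ∩
        ({ω | U i ω ≤ 1}ᶜ ∪
          {ω | (A.card : ℝ) + cnt Aᶜ (fun j => U j ω) (U i ω) < lam * n * U i ω})) := by
    apply Set.ext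
    intro ω
    simp only [Fev, Set.mem_setOf_eq, Set.mem_iInter, Set.mem_inter_iff, Set.mem_union,
      Set.mem_compl_iff, Finset.mem_compl]
    constructor
    · intro h i hiA
      obtain ⟨h1, h2⟩ := h i hiA
      refine ⟨h1, ?_⟩
      by_cases hle : U i ω ≤ 1
      · exact Or.inr (h2 hle)
      · exact Or.inl hle
    · intro h i hiA
      obtain ⟨h1, h2⟩ := h i hiA
      refine ⟨h1, fun hle => ?_⟩
      rcases h2 with h2 | h2
      · exact absurd hle h2
      · exact h2
  rw [heq]
  apply MeasurableSet.biInter (Finset.countable_toSet _)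
  intro i _
  apply MeasurableSet.inter
  · exact measurableSet_lt measurable_const (hmeas i)
  · apply MeasurableSet.union
    · exact (measurableSet_le (hmeas i) measurable_const).compl
    · exact measurableSet_lt (measurable_const.add (measurable_cnt_apply hmeas Aᶜ i))
        ((hmeas i).const_mul _)

lemma measurable_Dev (hmeas : ∀ i, Measurable (U i)) (J A : Finset (Fin n)) :
    MeasurableSet (Dev lam a U J A) := by
  apply MeasurableSet.inter
  · have : {ω | ∀ i ∈ A \ J, U i ω ≤ tv lam a n A.card} =
        ⋂ i ∈ A \ J, {ω | U i ω ≤ tv lam a n A.card} := by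
      apply Set.ext; intro ω; simp
    rw [this]
    apply MeasurableSet.biInter (Finset.countable_toSet _)
    intro i _
    exact measurableSet_le (hmeas i) measurable_const
  · exact measurable_Fev lam a hmeas A

variable (hlam : 1 ≤ lam) (ha : 0 < a) (ha1 : a ≤ 1) (hn : 0 < n)

include hlam ha ha1 hn in
lemma disj_Dev {J A A' : Finset (Fin n)} (hA : A ∈ AF lam a n J)
    (hA' : A' ∈ AF lam a n J) (hne : A ≠ A') :
    Disjoint (Dev lam a U J A) (Dev lam a U J A') := by
  rw [mem_AF] at hA hA'
  rw [Set.disjoint_left]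
  intro ω h1 h2
  apply hne
  obtain ⟨hin, hF⟩ := h1
  obtain ⟨hin', hF'⟩ := h2
  simp only [Fev, Set.mem_setOf_eq] at hF hF'
  apply disj_core hlam ha ha1 hn (x := fun j => U j ω) hA.1 hA'.1 hA.2 hA'.2
    hin (fun i hi => (hF i hi).1) (bridge hlam hn (fun i hi => (hF i hi).1)
      (fun i hi => (hF i hi).2))
    hin' (fun i hi => (hF' i hi).1) (bridge hlam hn (fun i hi => (hF' i hi).1)
      (fun i hi => (hF' i hi).2))

include hlam ha1 hn in
lemma law_Iic (hmeas : ∀ i, Measurable (U i))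
    (hlaw : ∀ i, Measure.map (U i) μ = volume.restrict (Set.Ioo (0:ℝ) 1))
    (i : Fin n) {r : ℝ} (h0 : 0 ≤ r) (h1 : r ≤ 1) :
    μ ((U i) ⁻¹' (Set.Iic r)) = ENNReal.ofReal r := by
  rw [← Measure.map_apply (hmeas i) measurableSet_Iic, hlaw i,
    Measure.restrict_apply measurableSet_Iic]
  rcases eq_or_lt_of_le h1 with rfl | hlt
  · have hint : Set.Iic (1:ℝ) ∩ Set.Ioo 0 1 = Set.Ioo 0 1 := by
      apply Set.inter_eq_right.mpr
      intro y hy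
      exact le_of_lt hy.2
    rw [hint, Real.volume_Ioo]
    norm_num
  · have hint : Set.Iic r ∩ Set.Ioo 0 1 = Set.Ioc 0 r := by
      apply Set.ext
      intro y
      simp only [Set.mem_inter_iff, Set.mem_Iic, Set.mem_Ioo, Set.mem_Ioc]
      constructor
      · rintro ⟨hyr, hy0, _⟩
        exact ⟨hy0, hyr⟩
      · rintro ⟨hy0, hyr⟩
        exact ⟨hyr, hy0, lt_of_le_of_lt hyr hlt⟩
    rw [hint, Real.volume_Ioc]
    norm_num

include hlam ha ha1 hn in
lemma measure_Dev (hmeas : ∀ i, Measurable (U i))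
    (hindep : iIndepFun U μ)
    (hlaw : ∀ i, Measure.map (U i) μ = volume.restrict (Set.Ioo (0:ℝ) 1))
    {J A : Finset (Fin n)} (hJA : J ⊆ A) :
    μ (Dev lam a U J A) =
      ENNReal.ofReal (tv lam a n A.card) ^ (A \ J).card * μ (Fev lam a U A) := by
  set t := tv lam a n A.card with htdef
  have ht0 : 0 ≤ t := le_of_lt (tv_pos ha _)
  have ht1 : t ≤ 1 := by
    apply tv_le_one hlam ha1 hn
    calc A.card ≤ Finset.univ.card := Finset.card_le_univ _
      _ = n := by simp
  have hdisj : Disjoint (A \ J) (Aᶜ : Finset (Fin n)) := by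
    rw [Finset.disjoint_left]
    intro i hi hic
    rw [Finset.mem_compl] at hic
    exact hic (Finset.mem_sdiff.mp hi).1
  have hI := hindep.indepFun_finset (A \ J) Aᶜ hdisj hmeas
  set Y : Ω → (↥(A \ J) → ℝ) := fun ω i => U i ω with hY
  set Z : Ω → (↥(Aᶜ : Finset (Fin n)) → ℝ) := fun ω i => U i ω with hZ
  set Sy : Set (↥(A \ J) → ℝ) := Set.univ.pi (fun _ => Set.Iic t) with hSy
  set Sz : Set (↥(Aᶜ : Finset (Fin n)) → ℝ) :=
    {y | ∀ i : ↥(Aᶜ : Finset (Fin n)), t < y i ∧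
      (y i ≤ 1 → (A.card : ℝ) +
        (∑ j ∈ (Aᶜ : Finset (Fin n)).attach, if y j ≤ y i then (1:ℝ) else 0)
        < lam * n * y i)} with hSz
  have hmSy : MeasurableSet Sy := MeasurableSet.univ_pi (fun _ => measurableSet_Iic)
  have hmSz : MeasurableSet Sz := by
    have heq : Sz = ⋂ i : ↥(Aᶜ : Finset (Fin n)),
        ({y : ↥(Aᶜ : Finset (Fin n)) → ℝ | t < y i} ∩
          ({y : ↥(Aᶜ : Finset (Fin n)) → ℝ | y i ≤ 1}ᶜ ∪
            {y : ↥(Aᶜ : Finset (Fin n)) → ℝ | (A.card : ℝ) +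
              (∑ j ∈ (Aᶜ : Finset (Fin n)).attach, if y j ≤ y i then (1:ℝ) else 0)
              < lam * n * y i})) := by
      apply Set.ext
      intro y
      simp only [hSz, Set.mem_setOf_eq, Set.mem_iInter, Set.mem_inter_iff, Set.mem_union,
        Set.mem_compl_iff]
      constructor
      · intro h i
        obtain ⟨h1, h2⟩ := h i
        refine ⟨h1, ?_⟩
        by_cases hle : y i ≤ 1
        · exact Or.inr (h2 hle)
        · exact Or.inl hle
      · intro h i
        obtain ⟨h1, h2⟩ := h i
        refine ⟨h1, fun hle => ?_⟩
        rcases h2 with h2 | h2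
        · exact absurd hle h2
        · exact h2
    rw [heq]
    apply MeasurableSet.iInter
    intro i
    apply MeasurableSet.inter
    · exact measurableSet_lt measurable_const (measurable_pi_apply i)
    · apply MeasurableSet.union
      · exact (measurableSet_le (measurable_pi_apply i) measurable_const).compl
      · apply measurableSet_lt
        · apply Measurable.add measurable_const
          apply Finset.measurable_sum
          intro j _
          exact Measurable.ite (measurableSet_le (measurable_pi_apply j)
            (measurable_pi_apply i)) measurable_const measurable_const
        · exact (measurable_pi_apply i).const_mul _
  have hcyl : Y ⁻¹' Sy = ⋂ i ∈ A \ J, (U i) ⁻¹' (Set.Iic t) := by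
    apply Set.ext
    intro ω
    simp only [hY, hSy, Set.mem_preimage, Set.mem_pi, Set.mem_univ, true_implies,
      Set.mem_iInter, Set.mem_Iic]
    constructor
    · intro h i hi
      exact h ⟨i, hi⟩
    · intro h i
      exact h i i.2
  have hFevZ : Fev lam a U A = Z ⁻¹' Sz := by
    apply Set.ext
    intro ω
    simp only [Fev, hZ, hSz, Set.mem_setOf_eq, Set.mem_preimage]
    have hsum : ∀ i : Fin n,
        (∑ j ∈ (Aᶜ : Finset (Fin n)).attach, if U (↑j) ω ≤ U i ω then (1:ℝ) else 0)
          = ((cnt Aᶜ (fun j => U j ω) (U i ω) : ℕ) : ℝ) := by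
      intro i
      rw [cnt_cast_sum]
      exact Finset.sum_attach (Aᶜ) (fun j => if U j ω ≤ U i ω then (1:ℝ) else 0)
    constructor
    · intro h i
      have hiA : ↑i ∉ A := by
        have := i.2
        rwa [Finset.mem_compl] at this
      obtain ⟨h1, h2⟩ := h ↑i hiA
      refine ⟨h1, fun hle => ?_⟩
      rw [hsum ↑i]
      exact h2 hle
    · intro h i hiA
      have hic : i ∈ (Aᶜ : Finset (Fin n)) := Finset.mem_compl.mpr hiA
      obtain ⟨h1, h2⟩ := h ⟨i, hic⟩
      refine ⟨h1, fun hle => ?_⟩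
      have := h2 hle
      rwa [hsum i] at this
  have hDev : Dev lam a U J A = Y ⁻¹' Sy ∩ Z ⁻¹' Sz := by
    unfold Dev
    rw [← hFevZ, hcyl]
    congr 1
    apply Set.ext
    intro ω
    simp [htdef]
  rw [hDev, hI.measure_inter_preimage_eq_mul _ _ hmSy hmSz]
  congr 1
  · rw [hcyl, hindep.measure_inter_preimage_eq_mul (A \ J)
      (sets := fun _ => Set.Iic t) (fun i _ => measurableSet_Iic)]
    rw [Finset.prod_congr rfl (fun i _ => law_Iic μ lam a hlam ha1 hn hmeas hlaw i ht0 ht1)]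
    rw [Finset.prod_const]
  · rw [hFevZ]

include hlam ha ha1 hn in
lemma sum_Dev_le_one (hmeas : ∀ i, Measurable (U i))
    (hindep : iIndepFun U μ)
    (hlaw : ∀ i, Measure.map (U i) μ = volume.restrict (Set.Ioo (0:ℝ) 1))
    (J : Finset (Fin n)) :
    ∑ A ∈ AF lam a n J, (tv lam a n A.card) ^ ((A \ J).card) *
      (μ (Fev lam a U A)).toReal ≤ 1 := by
  have hterm : ∀ A ∈ AF lam a n J,
      (tv lam a n A.card) ^ ((A \ J).card) * (μ (Fev lam a U A)).toReal
        = (μ (Dev lam a U J A)).toReal := by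
    intro A hA
    rw [mem_AF] at hA
    rw [measure_Dev μ lam a hlam ha ha1 hn hmeas hindep hlaw hA.1]
    rw [ENNReal.toReal_mul, ENNReal.toReal_pow,
      ENNReal.toReal_ofReal (le_of_lt (tv_pos ha _))]
  rw [Finset.sum_congr rfl hterm]
  rw [← ENNReal.toReal_sum (fun A _ => measure_ne_top μ _)]
  rw [← measure_biUnion_finset ?_ (fun A _ => measurable_Dev lam a hmeas J A)]
  · calc (μ (⋃ A ∈ AF lam a n J, Dev lam a U J A)).toReal
        ≤ (μ Set.univ).toReal := by
          apply ENNReal.toReal_mono (measure_ne_top μ _)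
          exact measure_mono (Set.subset_univ _)
    _ = 1 := by simp
  · intro A hA A' hA' hne
    exact disj_Dev lam a hlam ha ha1 hn hA hA' hne

include hlam ha ha1 hn in
lemma event_incl :
    {ω | lam ≤ ⨆ u : Set.Icc a 1, empCDF n (fun i => U i ω) u / u} ⊆
      ⋃ A ∈ AF lam a n (∅ : Finset (Fin n)), Dev lam a U ∅ A := by
  intro ω hω
  rw [Set.mem_setOf_eq] at hω
  obtain ⟨s, hsa, hs1, hc⟩ := sup_red hlam ha ha1 hn hω
  obtain ⟨A, hg, hmem, hnc⟩ := decomp hlam ha ha1 hn hsa hs1 hc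
  rw [Set.mem_iUnion₂]
  refine ⟨A, ?_, ?_, ?_⟩
  · rw [mem_AF]
    exact ⟨Finset.empty_subset _, hg⟩
  · intro i hi
    rw [Finset.sdiff_empty] at hi
    exact (hmem i).mp hi
  · intro i hiA
    have hout : tv lam a n A.card < U i ω := by
      by_contra hcon
      push_neg at hcon
      exact hiA ((hmem i).mpr hcon)
    exact ⟨hout, fun hle => hnc _ hout hle⟩

end measureLayer

section assembly

variable (hlam : 1 ≤ lam) (ha : 0 < a) (ha1 : a ≤ 1) (hn : 0 < n)

lemma philog {s t β : ℝ} (hs : 0 < s) (hst : s ≤ t) (hb : 0 ≤ β) :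
    s * Real.log ((s + β) / s) ≤ t * Real.log ((t + β) / t) := by
  have ht : 0 < t := lt_of_lt_of_le hs hst
  have h1 : (s + β)/s = 1 + β/s := by field_simp
  have h2 : (t + β)/t = 1 + β/t := by field_simp
  rw [h1, h2]
  have hbt : (0:ℝ) ≤ β / t := by positivity
  have hber : 1 + (t/s) * (β/t) ≤ (1 + β/t) ^ ((t:ℝ)/s) :=
    one_add_mul_self_le_rpow_one_add (by linarith) ((one_le_div hs).mpr hst)
  have h3 : (t/s) * (β/t) = β/s := by
    field_simp
  rw [h3] at hber
  have hp1 : (0:ℝ) < 1 + β/s := by positivity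
  have hp2 : (0:ℝ) < 1 + β/t := by positivity
  have h4 : Real.log (1 + β/s) ≤ Real.log ((1 + β/t) ^ ((t:ℝ)/s)) :=
    Real.log_le_log hp1 hber
  rw [Real.log_rpow hp2] at h4
  have h5 := mul_le_mul_of_nonneg_left h4 hs.le
  calc s * Real.log (1 + β/s) ≤ s * (t/s * Real.log (1 + β/t)) := h5
    _ = t * Real.log (1 + β/t) := by field_simp

include hlam ha hn in
lemma chern {k : ℕ} (hg : lam * n * a ≤ (k:ℝ)) :
    Real.exp (lam * n * a * Real.log lam) * (tv lam a n k) ^ k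
      ≤ (tv lam a n k + a * (lam - 1)) ^ k := by
  set β := a * (lam - 1) with hβ
  have hb : 0 ≤ β := by nlinarith
  set t := tv lam a n k with ht
  have ht0 : 0 < t := tv_pos ha _
  have hta : a ≤ t := tv_ge_a _
  have hpos := hln hlam hn
  have hkt : lam * n * t = (k:ℝ) := mul_tv_eq hlam hn hg
  have hsplit : (t + β)^k = ((t+β)/t)^k * t^k := by
    rw [← mul_pow, div_mul_cancel₀ _ (ne_of_gt ht0)]
  rw [hsplit]
  apply mul_le_mul_of_nonneg_right ?_ (by positivity)
  have hq : (0:ℝ) < (t+β)/t := by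
    apply div_pos ?_ ht0
    linarith
  have hlogid : ((t+β)/t)^k = Real.exp (k * Real.log ((t+β)/t)) := by
    rw [← Real.log_pow, Real.exp_log (by positivity)]
  rw [hlogid]
  apply Real.exp_le_exp.mpr
  have hphi := philog ha hta hb
  have ha' : a ≠ 0 := ne_of_gt ha
  have hloga : (a + β)/a = lam := by
    rw [hβ]
    field_simp
    ring
  rw [hloga] at hphi
  calc lam * n * a * Real.log lam = lam * n * (a * Real.log lam) := by ring
    _ ≤ lam * n * (t * Real.log ((t+β)/t)) := mul_le_mul_of_nonneg_left hphi hpos.le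
    _ = (lam * n * t) * Real.log ((t+β)/t) := by ring
    _ = k * Real.log ((t+β)/t) := by rw [hkt]

include hlam ha ha1 hn in
lemma assembly (p : Finset (Fin n) → ℝ) (hp0 : ∀ A, 0 ≤ p A)
    (hkey : ∀ J : Finset (Fin n),
      ∑ A ∈ AF lam a n J, (tv lam a n A.card) ^ ((A \ J).card) * p A ≤ 1) :
    ∑ A ∈ AF lam a n (∅ : Finset (Fin n)),
        (tv lam a n A.card) ^ ((A \ (∅ : Finset (Fin n))).card) * p A
      ≤ Real.exp (-(n * a * hfun lam)) := by
  set β := a * (lam - 1) with hβ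
  have hb : 0 ≤ β := by nlinarith
  set L := lam * n * a * Real.log lam with hL
  have hexpL : Real.exp (-L) * Real.exp L = 1 := by
    rw [← Real.exp_add]
    simp
  have step1 : ∑ A ∈ AF lam a n (∅ : Finset (Fin n)),
      (tv lam a n A.card) ^ ((A \ (∅ : Finset (Fin n))).card) * p A
      ≤ ∑ A ∈ AF lam a n (∅ : Finset (Fin n)),
        Real.exp (-L) * ((tv lam a n A.card + β)^A.card * p A) := by
    apply Finset.sum_le_sum
    intro A hA
    rw [mem_AF] at hA
    rw [Finset.sdiff_empty]
    have hch := chern hlam ha hn hA.2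
    calc (tv lam a n A.card)^A.card * p A
        = Real.exp (-L) * (Real.exp L * (tv lam a n A.card)^A.card) * p A := by
          rw [← mul_assoc, hexpL, one_mul]
      _ ≤ Real.exp (-L) * ((tv lam a n A.card + β)^A.card) * p A := by
          apply mul_le_mul_of_nonneg_right ?_ (hp0 A)
          exact mul_le_mul_of_nonneg_left hch (Real.exp_pos _).le
      _ = Real.exp (-L) * ((tv lam a n A.card + β)^A.card * p A) := by ring
  have hexpand : ∀ A : Finset (Fin n), (tv lam a n A.card + β)^A.card
      = ∑ J ∈ A.powerset, β^J.card * (tv lam a n A.card)^((A \ J).card) := by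
    intro A
    calc (tv lam a n A.card + β)^A.card = (β + tv lam a n A.card)^A.card := by
          rw [add_comm]
      _ = ∏ _i ∈ A, (β + tv lam a n A.card) := (Finset.prod_const _).symm
      _ = ∑ J ∈ A.powerset, (∏ _i ∈ J, β) * ∏ _i ∈ A \ J, tv lam a n A.card :=
          Finset.prod_add _ _ _
      _ = ∑ J ∈ A.powerset, β^J.card * (tv lam a n A.card)^((A \ J).card) := by
          apply Finset.sum_congr rfl
          intro J _
          rw [Finset.prod_const, Finset.prod_const]
  have step2 : ∑ A ∈ AF lam a n (∅ : Finset (Fin n)),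
      Real.exp (-L) * ((tv lam a n A.card + β)^A.card * p A)
      = Real.exp (-L) * ∑ J ∈ (Finset.univ : Finset (Fin n)).powerset,
          ∑ A ∈ AF lam a n J, β^J.card * ((tv lam a n A.card)^((A \ J).card) * p A) := by
    rw [← Finset.mul_sum]
    congr 1
    have hsw : ∑ A ∈ AF lam a n (∅ : Finset (Fin n)), ∑ J ∈ A.powerset,
        β^J.card * ((tv lam a n A.card)^((A \ J).card) * p A)
        = ∑ J ∈ (Finset.univ : Finset (Fin n)).powerset, ∑ A ∈ AF lam a n J,
          β^J.card * ((tv lam a n A.card)^((A \ J).card) * p A) := by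
      apply Finset.sum_comm'
      intro A J
      rw [mem_AF, mem_AF, Finset.mem_powerset, Finset.mem_powerset]
      constructor
      · rintro ⟨⟨-, hg⟩, hJA⟩
        exact ⟨⟨hJA, hg⟩, Finset.subset_univ _⟩
      · rintro ⟨⟨hJA, hg⟩, -⟩
        exact ⟨⟨Finset.empty_subset _, hg⟩, hJA⟩
    rw [← hsw]
    apply Finset.sum_congr rfl
    intro A _
    rw [hexpand A, Finset.sum_mul]
    apply Finset.sum_congr rfl
    intro J _
    ring
  have step3 : ∑ J ∈ (Finset.univ : Finset (Fin n)).powerset,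
      ∑ A ∈ AF lam a n J, β^J.card * ((tv lam a n A.card)^((A \ J).card) * p A)
      ≤ ∑ J ∈ (Finset.univ : Finset (Fin n)).powerset, β^J.card := by
    apply Finset.sum_le_sum
    intro J _
    rw [← Finset.mul_sum]
    calc β^J.card * ∑ A ∈ AF lam a n J, (tv lam a n A.card)^((A \ J).card) * p A
        ≤ β^J.card * 1 :=
          mul_le_mul_of_nonneg_left (hkey J) (pow_nonneg hb _)
      _ = β^J.card := mul_one _
  have step4 : ∑ J ∈ (Finset.univ : Finset (Fin n)).powerset, β^J.card = (β + 1)^n := by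
    calc ∑ J ∈ (Finset.univ : Finset (Fin n)).powerset, β^J.card
        = ∑ J ∈ (Finset.univ : Finset (Fin n)).powerset,
            (∏ _i ∈ J, β) * ∏ _i ∈ Finset.univ \ J, (1:ℝ) := by
          apply Finset.sum_congr rfl
          intro J _
          rw [Finset.prod_const, Finset.prod_const, one_pow, mul_one]
      _ = ∏ _i ∈ (Finset.univ : Finset (Fin n)), (β + 1) := (Finset.prod_add _ _ _).symm
      _ = (β + 1)^n := by
          rw [Finset.prod_const, Finset.card_univ, Fintype.card_fin]
  have step5 : (β + 1)^n ≤ Real.exp (n * β) := by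
    have h1 : β + 1 ≤ Real.exp β := by
      linarith [Real.add_one_le_exp β]
    calc (β + 1)^n ≤ (Real.exp β)^n := pow_le_pow_left₀ (by linarith) h1 n
      _ = Real.exp (n * β) := (Real.exp_nat_mul β n).symm
  have final : Real.exp (-L) * Real.exp (n * β) = Real.exp (-(n * a * hfun lam)) := by
    rw [← Real.exp_add]
    congr 1
    rw [hL, hβ]
    unfold hfun
    ring
  calc ∑ A ∈ AF lam a n (∅ : Finset (Fin n)),
      (tv lam a n A.card) ^ ((A \ (∅ : Finset (Fin n))).card) * p A
      ≤ ∑ A ∈ AF lam a n (∅ : Finset (Fin n)),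
        Real.exp (-L) * ((tv lam a n A.card + β)^A.card * p A) := step1
    _ = Real.exp (-L) * ∑ J ∈ (Finset.univ : Finset (Fin n)).powerset,
          ∑ A ∈ AF lam a n J, β^J.card * ((tv lam a n A.card)^((A \ J).card) * p A) :=
        step2
    _ ≤ Real.exp (-L) * ∑ J ∈ (Finset.univ : Finset (Fin n)).powerset, β^J.card :=
        mul_le_mul_of_nonneg_left step3 (Real.exp_pos _).le
    _ = Real.exp (-L) * (β + 1)^n := by rw [step4]
    _ ≤ Real.exp (-L) * Real.exp (n * β) :=
        mul_le_mul_of_nonneg_left step5 (Real.exp_pos _).le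
    _ = Real.exp (-(n * a * hfun lam)) := final

end assembly
end WellnerAux


open WellnerAux in
/-- Wellner's inequality (i): for i.i.d. Uniform(0,1) variables,
`Pr(sup_{a ≤ u ≤ 1} Gₙ(u)/u ≥ λ) ≤ exp(-n a h(λ))`. -/
theorem wellner_i {Ω : Type*} [MeasurableSpace Ω] (μ : Measure Ω)
    [IsProbabilityMeasure μ] (n : ℕ) (U : Fin n → Ω → ℝ)
    (hmeas : ∀ i, Measurable (U i))
    (hindep : iIndepFun U μ)
    (hlaw : ∀ i, Measure.map (U i) μ = volume.restrict (Set.Ioo (0:ℝ) 1))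
    (lam a : ℝ) (hlam : 1 ≤ lam) (ha : 0 < a) (ha1 : a ≤ 1) :
    (μ {ω | lam ≤ ⨆ u : Set.Icc a 1, empCDF n (fun i => U i ω) u / u}).toReal ≤
      Real.exp (-(n * a * hfun lam)) := by
  have hne : Nonempty (Set.Icc a 1) := ⟨⟨a, le_refl _, ha1⟩⟩
  rcases Nat.eq_zero_or_pos n with hn0 | hn
  · subst hn0
    have hempty : {ω | lam ≤ ⨆ u : Set.Icc a 1, empCDF 0 (fun i => U i ω) u / u}
        = (∅ : Set Ω) := by
      apply Set.eq_empty_iff_forall_notMem.mpr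
      intro ω hω
      rw [Set.mem_setOf_eq] at hω
      have h0 : (⨆ u : Set.Icc a 1, empCDF 0 (fun i => U i ω) u / u) = 0 := by
        have hz : ∀ u : Set.Icc a 1, empCDF 0 (fun i => U i ω) (u:ℝ) / (u:ℝ) = 0 := by
          intro u
          unfold empCDF
          norm_num
        calc (⨆ u : Set.Icc a 1, empCDF 0 (fun i => U i ω) u / u)
            = ⨆ _u : Set.Icc a 1, (0:ℝ) := by
              congr 1
              funext u
              exact hz u
          _ = 0 := ciSup_const
      rw [h0] at hω
      linarith
    rw [hempty]
    simp only [measure_empty, ENNReal.toReal_zero]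
    positivity
  · set p : Finset (Fin n) → ℝ := fun A => (μ (Fev lam a U A)).toReal with hp
    have hsub := event_incl lam a hlam ha ha1 hn (U := U)
    have h1 : (μ {ω | lam ≤ ⨆ u : Set.Icc a 1, empCDF n (fun i => U i ω) u / u}).toReal
        ≤ (μ (⋃ A ∈ AF lam a n (∅ : Finset (Fin n)), Dev lam a U ∅ A)).toReal :=
      ENNReal.toReal_mono (measure_ne_top μ _) (measure_mono hsub)
    have h2 : (μ (⋃ A ∈ AF lam a n (∅ : Finset (Fin n)), Dev lam a U ∅ A)).toReal
        ≤ ∑ A ∈ AF lam a n (∅ : Finset (Fin n)),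
            (tv lam a n A.card) ^ ((A \ (∅ : Finset (Fin n))).card) * p A := by
      have hsum_ne : (∑ A ∈ AF lam a n (∅ : Finset (Fin n)), μ (Dev lam a U ∅ A)) ≠ ⊤ :=
        ENNReal.sum_ne_top.mpr (fun A _ => measure_ne_top μ _)
      calc (μ (⋃ A ∈ AF lam a n (∅ : Finset (Fin n)), Dev lam a U ∅ A)).toReal
          ≤ (∑ A ∈ AF lam a n (∅ : Finset (Fin n)), μ (Dev lam a U ∅ A)).toReal :=
            ENNReal.toReal_mono hsum_ne (measure_biUnion_finset_le _ _)
        _ = ∑ A ∈ AF lam a n (∅ : Finset (Fin n)), (μ (Dev lam a U ∅ A)).toReal :=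
            ENNReal.toReal_sum (fun A _ => measure_ne_top μ _)
        _ = ∑ A ∈ AF lam a n (∅ : Finset (Fin n)),
            (tv lam a n A.card) ^ ((A \ (∅ : Finset (Fin n))).card) * p A := by
            apply Finset.sum_congr rfl
            intro A hA
            rw [measure_Dev μ lam a hlam ha ha1 hn hmeas hindep hlaw
              (Finset.empty_subset A)]
            rw [ENNReal.toReal_mul, ENNReal.toReal_pow,
              ENNReal.toReal_ofReal (le_of_lt (tv_pos ha _))]
    have h3 := assembly hlam ha ha1 hn p (fun A => ENNReal.toReal_nonneg)
      (fun J => sum_Dev_le_one μ lam a hlam ha ha1 hn hmeas hindep hlaw J)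
    linarith
end
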